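/- Let (V, ≤) be a linear order and (V, ⪯) a well-order, and define the relation ⊑ on V by: a ⊑ b iff a ⪯ b and there is no c strictly ≤-between a and b with c ⪯ a and c ⪯ b. Then (V, ⊑) is a tree: ⊑ is a partial order whose minimum element is the ⪯-least element of V, and for every a ∈ V the set {b : b ⊑ a} is well-ordered by ⊑. -/
import Mathlib


universe u

/-- `c` is strictly `le`-between `a` and `b`. -/
def strictlyBetween {α : Type u} (le : α → α → Prop) (a c b : α) : Prop :=
  (le a c ∧ le c b ∧ c ≠ a ∧ c ≠ b) ∨ (le b c ∧ le c a ∧ c ≠ a ∧ c ≠ b)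

/-- The tree relation `⊑` of `T(V, ≤, ⪯)`: `a ⊑ b` iff `a ⪯ b` and there is no `c`
strictly `≤`-between `a` and `b` with `c ⪯ a` and `c ⪯ b`. -/
def treeRel {α : Type u} (le pre : α → α → Prop) (a b : α) : Prop :=
  pre a b ∧ ¬∃ c, strictlyBetween le a c b ∧ pre c a ∧ pre c b

/-- `s` is well-ordered by `r` (`r` is a reflexive `≤`-style relation):
`r` is total on `s` and every nonempty subset of `s` has an `r`-least element. -/
def IsWellOrderedOn {α : Type u} (r : α → α → Prop) (s : Set α) : Prop :=
  (∀ a ∈ s, ∀ b ∈ s, r a b ∨ r b a) ∧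
  ∀ t : Set α, t ⊆ s → t.Nonempty → ∃ m ∈ t, ∀ x ∈ t, r m x

/-- `r` is a (set-theoretic, rooted) tree order: a partial order with a minimum element
in which the set of predecessors of every element is well-ordered. -/
def IsTreeOrder {α : Type u} (r : α → α → Prop) : Prop :=
  IsPartialOrder α r ∧ (∃ root, ∀ a, r root a) ∧
  ∀ a, IsWellOrderedOn r {b | r b a}

/-- `a` is a leaf of the tree order `r`: it has no strict successor. -/
def isLeaf {α : Type u} (r : α → α → Prop) (a : α) : Prop := ∀ b, r a b → b = a

/-- `b` is a son (immediate successor) of `a` in the tree order `r`. -/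
def isSon {α : Type u} (r : α → α → Prop) (a b : α) : Prop :=
  r a b ∧ a ≠ b ∧ ∀ c, r a c → r c b → c = a ∨ c = b

/-- `a` has exactly two sons in the tree order `r`. -/
def hasTwoSons {α : Type u} (r : α → α → Prop) (a : α) : Prop :=
  ∃ b c, b ≠ c ∧ isSon r a b ∧ isSon r a c ∧ ∀ d, isSon r a d → d = b ∨ d = c

/-- `(le, pre)` is a compatible pair of orders: `le` is a linear order, `pre` a preorder,
`T(V, le, pre)` is defined (i.e. `treeRel le pre` is a tree order), and every element
is either a leaf or has exactly two sons. -/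
def CompatPair {α : Type u} (le pre : α → α → Prop) : Prop :=
  IsLinearOrder α le ∧ IsPreorder α pre ∧ IsTreeOrder (treeRel le pre) ∧
  ∀ a, isLeaf (treeRel le pre) a ∨ hasTwoSons (treeRel le pre) a

/-- `m` is the meet of `a` and `b` in the tree order `r`. -/
def isMeet {α : Type u} (r : α → α → Prop) (a b m : α) : Prop :=
  r m a ∧ r m b ∧ ∀ x, r x a → r x b → r x m

/-- `C` is closed under the meet operation of the tree order `r`. -/
def MeetClosed {α : Type u} (r : α → α → Prop) (C : Set α) : Prop :=
  ∀ a ∈ C, ∀ b ∈ C, ∀ m, isMeet r a b m → m ∈ C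

/-- For a linear order `(V, ≤)` and a well-order `(V, ⪯)`, the relation `⊑` of
`T(V, ≤, ⪯)` is a tree order: a partial order whose minimum element is the `⪯`-least
element of `V`, with all predecessor sets well-ordered by `⊑`. -/

theorem sB_symm {α : Type u} (le : α → α → Prop) {a c b : α}
    (h : strictlyBetween le a c b) : strictlyBetween le b c a := by
  rcases h with ⟨h1, h2, h3, h4⟩ | ⟨h1, h2, h3, h4⟩
  · exact Or.inr ⟨h1, h2, h4, h3⟩
  · exact Or.inl ⟨h1, h2, h4, h3⟩

theorem sB_split {α : Type u} (le : α → α → Prop) (hle : IsLinearOrder α le)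
    {a c b : α} (h : strictlyBetween le a c b) (z : α) :
    c = z ∨ strictlyBetween le a c z ∨ strictlyBetween le z c b := by
  haveI := hle
  by_cases hcz : c = z
  · exact Or.inl hcz
  rcases total_of le c z with h1 | h1
  · rcases h with ⟨hac, hcb, hna, hnb⟩ | ⟨hbc, hca, hna, hnb⟩
    · exact Or.inr (Or.inl (Or.inl ⟨hac, h1, hna, hcz⟩))
    · exact Or.inr (Or.inr (Or.inr ⟨hbc, h1, hcz, hnb⟩))
  · rcases h with ⟨hac, hcb, hna, hnb⟩ | ⟨hbc, hca, hna, hnb⟩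
    · exact Or.inr (Or.inr (Or.inl ⟨h1, hcb, hcz, hnb⟩))
    · exact Or.inr (Or.inl (Or.inr ⟨h1, hca, hna, hcz⟩))

theorem treeRel_isTree {V : Type u} [Nonempty V] (le pre : V → V → Prop)
    (hle : IsLinearOrder V le) (hpre : IsLinearOrder V pre)
    (hwo : ∀ s : Set V, s.Nonempty → ∃ m ∈ s, ∀ x ∈ s, pre m x) :
    IsPartialOrder V (treeRel le pre) ∧
    (∃ r : V, (∀ x, pre r x) ∧ ∀ a, treeRel le pre r a) ∧
    (∀ a, IsWellOrderedOn (treeRel le pre) {b | treeRel le pre b a}) := by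
  haveI := hle; haveI := hpre
  have hrefl : ∀ a, treeRel le pre a a := by
    intro a
    refine ⟨refl_of pre a, ?_⟩
    rintro ⟨c, hc, _, _⟩
    rcases hc with ⟨h1, h2, h3, _⟩ | ⟨h1, h2, h3, _⟩ <;> exact h3 (antisymm_of le h2 h1)
  have htrans : ∀ a b c, treeRel le pre a b → treeRel le pre b c → treeRel le pre a c := by
    rintro a b c ⟨hab, hnab⟩ ⟨hbc, hnbc⟩
    refine ⟨trans_of pre hab hbc, ?_⟩
    rintro ⟨d, hd, hda, hdc⟩
    rcases sB_split le hle hd b with rfl | h | h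
    · exact (hd.elim (fun h => h.2.2.1) (fun h => h.2.2.1)) (antisymm_of pre hda hab)
    · exact hnab ⟨d, h, hda, trans_of pre hda hab⟩
    · exact hnbc ⟨d, h, trans_of pre hda hab, hdc⟩
  have htot : ∀ a b c, treeRel le pre b a → treeRel le pre c a → pre b c →
      treeRel le pre b c := by
    rintro a b c ⟨hba, hnba⟩ ⟨hca, hnca⟩ hbc
    refine ⟨hbc, ?_⟩
    rintro ⟨d, hd, hdb, hdc⟩
    rcases sB_split le hle hd a with rfl | h | h
    · exact (hd.elim (fun h => h.2.2.1) (fun h => h.2.2.1)) (antisymm_of pre hdb hba)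
    · exact hnba ⟨d, h, hdb, trans_of pre hdb hba⟩
    · exact hnca ⟨d, sB_symm le h, hdc, trans_of pre hdc hca⟩
  refine ⟨{ refl := hrefl
            trans := htrans
            antisymm := fun a b h1 h2 => antisymm_of pre h1.1 h2.1 }, ?_, ?_⟩
  · obtain ⟨r, -, hr⟩ := hwo Set.univ ⟨Classical.arbitrary V, trivial⟩
    have hrx : ∀ x, pre r x := fun x => hr x trivial
    refine ⟨r, hrx, fun a => ⟨hrx a, ?_⟩⟩
    rintro ⟨c, hc, hcr, -⟩
    rcases hc with ⟨h1, h2, h3, h4⟩ | ⟨h1, h2, h3, h4⟩ <;>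
      exact h3 (antisymm_of pre hcr (hrx c))
  · intro a
    constructor
    · intro b hb c hc
      rcases total_of pre b c with h | h
      · exact Or.inl (htot a b c hb hc h)
      · exact Or.inr (htot a c b hc hb h)
    · intro t hts ht
      obtain ⟨m, hmt, hm⟩ := hwo t ht
      exact ⟨m, hmt, fun x hxt => htot a m x (hts hmt) (hts hxt) (hm x hxt)⟩
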